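/- Let X and Y be first countable compact Hausdorff spaces, each with at least two points, and let Δ : C(X) → C(Y) be a 2-local diameter-preserving map. Fix (x₁, x₂) ∈ X̃ and let h ∈ C(X) be a continuous function with values in [0,1] such that h⁻¹({1}) = {x₁} and h⁻¹({0}) = {x₂}. Then for every f ∈ C(X) the set B_{(x₁,x₂),f} is a nonempty closed subset of Ỹ × 𝕋, and B_{(x₁,x₂),h} ⊆ B_{(x₁,x₂),f} for every f ∈ C(X). -/

import Mathlib

noncomputable section

/-- The diameter seminorm `ρ(f) = sup{|f(x) - f(z)| : x, z ∈ X}` on `C(X, ℂ)`. -/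
def cdiam {X : Type*} [TopologicalSpace X] (f : C(X, ℂ)) : ℝ :=
  ⨆ p : X × X, ‖f p.1 - f p.2‖

/-- A map `Δ : C(X) → C(Y)` is diameter-preserving if `ρ(Δ f - Δ g) = ρ(f - g)` for all `f, g`. -/
def DiamPreserving {X Y : Type*} [TopologicalSpace X] [TopologicalSpace Y]
    (Δ : C(X, ℂ) → C(Y, ℂ)) : Prop :=
  ∀ f g, cdiam (Δ f - Δ g) = cdiam (f - g)

/-- A map `Δ : C(X) → C(Y)` is a 2-local diameter-preserving map if for every `f, g` there is a
diameter-preserving linear bijection agreeing with `Δ` at `f` and `g`. -/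
def TwoLocalDiamPreserving {X Y : Type*} [TopologicalSpace X] [TopologicalSpace Y]
    (Δ : C(X, ℂ) → C(Y, ℂ)) : Prop :=
  ∀ f g : C(X, ℂ), ∃ T : C(X, ℂ) →ₗ[ℂ] C(Y, ℂ),
    Function.Bijective T ∧ DiamPreserving T ∧ T f = Δ f ∧ T g = Δ g

/-- The set `B_{(x₁,x₂),f} = {((y₁,y₂),λ) ∈ Ỹ × 𝕋 : Δ(f)(y₁) - Δ(f)(y₂) = λ(f(x₁) - f(x₂))}`. -/
def Bset {X Y : Type*} [TopologicalSpace X] [TopologicalSpace Y]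
    (Δ : C(X, ℂ) → C(Y, ℂ)) (x₁ x₂ : X) (f : C(X, ℂ)) : Set ((Y × Y) × ℂ) :=
  {p | p.1.1 ≠ p.1.2 ∧ ‖p.2‖ = 1 ∧
    Δ f p.1.1 - Δ f p.1.2 = p.2 * (f x₁ - f x₂)}

/-- For a 2-local diameter-preserving map `Δ` and a peaking function `h` for `(x₁, x₂)`, each
`B_{(x₁,x₂),f}` is a nonempty closed subset of `Ỹ × 𝕋`, and `B_{(x₁,x₂),h} ⊆ B_{(x₁,x₂),f}`
for every `f`. -/
lemma cdiam_nonneg {X : Type*} [TopologicalSpace X] (g : C(X, ℂ)) : 0 ≤ cdiam g :=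
  Real.iSup_nonneg fun _ => norm_nonneg _

lemma cdiam_le {X : Type*} [TopologicalSpace X] {g : C(X, ℂ)} {C : ℝ} (hC : 0 ≤ C)
    (hb : ∀ u v, ‖g u - g v‖ ≤ C) : cdiam g ≤ C :=
  Real.iSup_le (fun p => hb p.1 p.2) hC

lemma pair_le_cdiam {X : Type*} [TopologicalSpace X] [CompactSpace X] (g : C(X, ℂ)) (u v : X) :
    ‖g u - g v‖ ≤ cdiam g := by
  refine le_ciSup_of_le ⟨‖g‖ + ‖g‖, ?_⟩ (u, v) le_rfl
  rintro _ ⟨p, rfl⟩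
  calc ‖g p.1 - g p.2‖ = ‖g p.1 - g p.2‖ := rfl
    _ ≤ ‖g p.1‖ + ‖g p.2‖ := norm_sub_le _ _
    _ ≤ ‖g‖ + ‖g‖ := add_le_add (g.norm_coe_le_norm _) (g.norm_coe_le_norm _)

lemma cdiam_exists {Y : Type*} [TopologicalSpace Y] [CompactSpace Y] [Nonempty Y]
    (g : C(Y, ℂ)) : ∃ y₁ y₂ : Y, cdiam g = ‖g y₁ - g y₂‖ := by
  obtain ⟨p, -, hp⟩ := isCompact_univ.exists_isMaxOn Set.univ_nonempty
    ((continuous_norm.comp ((g.continuous.comp continuous_fst).sub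
      (g.continuous.comp continuous_snd))).continuousOn :
      ContinuousOn (fun p : Y × Y => ‖g p.1 - g p.2‖) Set.univ)
  exact ⟨p.1, p.2, le_antisymm (Real.iSup_le (fun q => hp (Set.mem_univ q))
    (norm_nonneg _)) (pair_le_cdiam g p.1 p.2)⟩

lemma minpos {X : Type*} [TopologicalSpace X] [CompactSpace X]
    {K : Set X} (hK : IsClosed K) {r : X → ℝ} (hr : Continuous r)
    (hpos : ∀ u ∈ K, 0 < r u) : ∃ δ > 0, ∀ u ∈ K, δ ≤ r u := by
  rcases K.eq_empty_or_nonempty with hE | hNE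
  · exact ⟨1, one_pos, by simp [hE]⟩
  · obtain ⟨u₀, hu₀, hmin⟩ := hK.isCompact.exists_isMinOn hNE hr.continuousOn
    exact ⟨r u₀, hpos u₀ hu₀, hmin⟩

lemma key_zero {X : Type*} [TopologicalSpace X] [CompactSpace X]
    (x₁ x₂ : X) (h : C(X, ℂ))
    (hval : ∀ x, ∃ t : ℝ, 0 ≤ t ∧ t ≤ 1 ∧ h x = t)
    (h1 : ⇑h ⁻¹' {1} = {x₁}) (h0 : ⇑h ⁻¹' {0} = {x₂})
    (ψ : C(X, ℂ) →ₗ[ℂ] ℂ) (hψ : ∀ g, ‖ψ g‖ ≤ cdiam g)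
    (hlam : ‖ψ h‖ = 1)
    (f₀ : C(X, ℂ)) (hf1 : f₀ x₁ = 0) (hf2 : f₀ x₂ = 0) : ψ f₀ = 0 := by
  have hre : ∀ u, h u = ((h u).re : ℂ) ∧ 0 ≤ (h u).re ∧ (h u).re ≤ 1 := by
    intro u
    obtain ⟨t, ht0, ht1, htu⟩ := hval u
    rw [htu]; simpa using ⟨ht0, ht1⟩
  by_contra hc
  set c := ψ f₀ with hcdef
  have hac : 0 < ‖c‖ := norm_pos_iff.mpr hc
  set ac := ‖c‖ with hacdef
  set lam := ψ h with hlamdef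
  set e : ℂ := lam * (starRingEnd ℂ c) / (ac : ℂ) with hedef
  have hacC : (ac : ℂ) ≠ 0 := by exact_mod_cast hac.ne'
  have hae : ‖e‖ = 1 := by
    have h' : ‖e‖ = ‖lam‖ * ‖(starRingEnd ℂ) c‖ /
        ‖((ac : ℝ) : ℂ)‖ := by
      rw [hedef, norm_div, norm_mul]
    rw [h']
    rw [hlam]
    rw [Complex.norm_conj]
    rw [Complex.norm_real, Real.norm_eq_abs]
    rw [one_mul, ← hacdef, abs_of_pos hac, div_self hac.ne']
  have hcc : (starRingEnd ℂ c) * c = ((ac ^ 2 : ℝ) : ℂ) := by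
    rw [mul_comm, Complex.mul_conj, Complex.normSq_eq_norm_sq]
  have hec : e * c = lam * (ac : ℂ) := by
    rw [hedef, div_mul_eq_mul_div, mul_assoc, hcc, div_eq_iff hacC]
    push_cast; ring
  set M := ‖f₀‖ with hMdef
  have hM0 : 0 ≤ M := norm_nonneg _
  have hM : ∀ u, ‖f₀ u‖ ≤ M := fun u => f₀.norm_coe_le_norm u
  set ε := ac / 4 with hεdef
  have hε : 0 < ε := by positivity
  set K : Set X := {u | ε ≤ ‖f₀ u‖} with hKdef
  have hKc : IsClosed K :=
    isClosed_le continuous_const (continuous_norm.comp f₀.continuous)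
  have hK1 : ∀ u ∈ K, (h u).re < 1 := by
    intro u hu
    rcases lt_or_eq_of_le (hre u).2.2 with h' | h'
    · exact h'
    · exfalso
      have hu1 : h u = 1 := by rw [(hre u).1, h']; norm_num
      have : u ∈ (⇑h ⁻¹' {1} : Set X) := hu1
      rw [h1] at this
      rw [Set.mem_singleton_iff] at this
      subst this
      have : ε ≤ ‖f₀ u‖ := hu
      rw [hf1] at this; simp at this; linarith
  have hK0 : ∀ u ∈ K, 0 < (h u).re := by
    intro u hu
    rcases lt_or_eq_of_le (hre u).2.1 with h' | h'
    · exact h'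
    · exfalso
      have hu0 : h u = 0 := by rw [(hre u).1, ← h']; norm_num
      have : u ∈ (⇑h ⁻¹' {0} : Set X) := hu0
      rw [h0] at this
      rw [Set.mem_singleton_iff] at this
      subst this
      have : ε ≤ ‖f₀ u‖ := hu
      rw [hf2] at this; simp at this; linarith
  obtain ⟨δ₁, hδ₁, hδ₁K⟩ := minpos hKc (continuous_const.sub (Complex.continuous_re.comp h.continuous))
    (fun u hu => sub_pos.mpr (hK1 u hu))
  obtain ⟨δ₂, hδ₂, hδ₂K⟩ := minpos hKc (Complex.continuous_re.comp h.continuous) hK0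
  set δ := min δ₁ δ₂ with hδdef
  have hδ : 0 < δ := lt_min hδ₁ hδ₂
  have hKmid : ∀ u ∈ K, δ ≤ (h u).re ∧ (h u).re ≤ 1 - δ := by
    intro u hu
    constructor
    · exact le_trans (min_le_right _ _) (hδ₂K u hu)
    · have := hδ₁K u hu
      have h2 : δ ≤ 1 - (h u).re := le_trans (min_le_left _ _) this
      linarith
  set t := δ / (4 * M + 1) with htdef
  have htpos : 0 < t := by positivity
  have ht2M : 2 * t * M ≤ δ / 2 := by
    have h4 : t * (4 * M + 1) = δ := by rw [htdef]; field_simp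
    nlinarith [htpos.le, hM0, hδ.le]
  set g : C(X, ℂ) := h + ((t : ℂ) * e) • f₀ with hgdef
  have hψg : ψ g = lam * (1 + ((t * ac : ℝ) : ℂ)) := by
    rw [hgdef, map_add, map_smul, smul_eq_mul, ← hcdef, ← hlamdef]
    push_cast
    linear_combination (t : ℂ) * hec
  have habsg : ‖ψ g‖ = 1 + t * ac := by
    rw [hψg, norm_mul, hlam, one_mul]
    rw [show (1 : ℂ) + ((t * ac : ℝ) : ℂ) = (((1 + t * ac : ℝ)) : ℂ) by push_cast; ring]
    rw [Complex.norm_real, Real.norm_eq_abs, abs_of_pos (by positivity)]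
  have habsw : ∀ u, ‖(t : ℂ) * e * f₀ u‖ = t * ‖f₀ u‖ := by
    intro u
    rw [norm_mul, norm_mul, hae, Complex.norm_real, Real.norm_eq_abs, abs_of_pos htpos, mul_one]
  have hgu : ∀ u, g u = h u + (t : ℂ) * e * f₀ u := by
    intro u; simp [hgdef]
  have hmidabs : ∀ u v : X, u ∈ K ∨ v ∈ K → ‖h u - h v‖ ≤ 1 - δ := by
    intro u v huv
    have hu' := hre u; have hv' := hre v
    have habs : ‖h u - h v‖ = |(h u).re - (h v).re| := by
      nth_rewrite 1 [hu'.1]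
      nth_rewrite 1 [hv'.1]
      rw [← Complex.ofReal_sub, Complex.norm_real, Real.norm_eq_abs]
    rw [habs, abs_le]
    rcases huv with hu | hv
    · obtain ⟨ha1, ha2⟩ := hKmid u hu
      exact ⟨by linarith [hv'.2.2], by linarith [hv'.2.1]⟩
    · obtain ⟨hb1, hb2⟩ := hKmid v hv
      exact ⟨by linarith [hu'.2.2], by linarith [hu'.2.1]⟩
  have hbound : cdiam g ≤ max (1 + 2 * t * ε) (1 - δ + 2 * t * M) := by
    apply cdiam_le (le_trans (by positivity) (le_max_left _ _))
    intro u v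
    have htri : ‖g u - g v‖ ≤
        ‖h u - h v‖ + t * ‖f₀ u‖ + t * ‖f₀ v‖ := by
      rw [hgu u, hgu v]
      calc ‖(h u + (t:ℂ)*e*f₀ u) - (h v + (t:ℂ)*e*f₀ v)‖
          = ‖(h u - h v) + ((t:ℂ)*e*f₀ u - (t:ℂ)*e*f₀ v)‖ := by ring_nf
        _ ≤ ‖h u - h v‖ + ‖(t:ℂ)*e*f₀ u - (t:ℂ)*e*f₀ v‖ :=
            norm_add_le _ _
        _ ≤ ‖h u - h v‖ + (‖(t:ℂ)*e*f₀ u‖ + ‖(t:ℂ)*e*f₀ v‖) := by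
            have := norm_sub_le ((t:ℂ)*e*f₀ u) ((t:ℂ)*e*f₀ v)
            linarith [norm_sub_le ((t:ℂ)*e*f₀ u) ((t:ℂ)*e*f₀ v)]
        _ = ‖h u - h v‖ + t * ‖f₀ u‖ + t * ‖f₀ v‖ := by
            rw [habsw u, habsw v]; ring
    by_cases hK' : u ∈ K ∨ v ∈ K
    · refine le_trans ?_ (le_max_right _ _)
      have h1' := hmidabs u v hK'
      have := hM u; have := hM v
      nlinarith [htpos.le]
    · push_neg at hK'
      refine le_trans ?_ (le_max_left _ _)
      have hu' : ‖f₀ u‖ ≤ ε := le_of_not_ge (fun hh => hK'.1 hh)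
      have hv' : ‖f₀ v‖ ≤ ε := le_of_not_ge (fun hh => hK'.2 hh)
      have habsh : ‖h u - h v‖ ≤ 1 := by
        have hu'' := hre u; have hv'' := hre v
        have : ‖h u - h v‖ = |(h u).re - (h v).re| := by
          nth_rewrite 1 [hu''.1]
          nth_rewrite 1 [hv''.1]
          rw [← Complex.ofReal_sub, Complex.norm_real, Real.norm_eq_abs]
        rw [this, abs_le]
        exact ⟨by linarith [hu''.2.1, hv''.2.2], by linarith [hu''.2.2, hv''.2.1]⟩
      nlinarith [htpos.le]
  have hψg' : 1 + t * ac ≤ cdiam g := by rw [← habsg]; exact hψ g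
  have hfinal := le_trans hψg' hbound
  rw [le_max_iff] at hfinal
  have htac : 0 < t * ac := by positivity
  rcases hfinal with h' | h'
  · rw [hεdef] at h'
    nlinarith
  · nlinarith

lemma key_full {X : Type*} [TopologicalSpace X] [CompactSpace X]
    (x₁ x₂ : X) (h : C(X, ℂ))
    (hval : ∀ x, ∃ t : ℝ, 0 ≤ t ∧ t ≤ 1 ∧ h x = t)
    (h1 : ⇑h ⁻¹' {1} = {x₁}) (h0 : ⇑h ⁻¹' {0} = {x₂})
    (ψ : C(X, ℂ) →ₗ[ℂ] ℂ) (hψ : ∀ g, ‖ψ g‖ ≤ cdiam g)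
    (hlam : ‖ψ h‖ = 1)
    (f : C(X, ℂ)) : ψ f = ψ h * (f x₁ - f x₂) := by
  have hx1 : h x₁ = 1 := by
    have : x₁ ∈ (⇑h ⁻¹' {1} : Set X) := by rw [h1]; exact rfl
    exact this
  have hx2 : h x₂ = 0 := by
    have : x₂ ∈ (⇑h ⁻¹' {0} : Set X) := by rw [h0]; exact rfl
    exact this
  have hone : ψ (1 : C(X, ℂ)) = 0 := by
    have hb := hψ 1
    have hz : cdiam (1 : C(X, ℂ)) = 0 :=
      le_antisymm (cdiam_le le_rfl (by simp)) (cdiam_nonneg _)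
    rw [hz] at hb
    exact norm_eq_zero.mp (le_antisymm hb (norm_nonneg _))
  set f₀ : C(X, ℂ) := f - (f x₁ - f x₂) • h - (f x₂) • 1 with hf₀
  have h01 : f₀ x₁ = 0 := by simp [hf₀, hx1]
  have h02 : f₀ x₂ = 0 := by simp [hf₀, hx2]
  have hz := key_zero x₁ x₂ h hval h1 h0 ψ hψ hlam f₀ h01 h02
  have hexp : ψ f₀ = ψ f - (f x₁ - f x₂) * ψ h - (f x₂) * ψ 1 := by
    rw [hf₀]
    simp [map_sub, map_smul]
  rw [hexp, hone] at hz
  linear_combination hz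

theorem Bset_nonempty_closed_and_contains_peak
    {X Y : Type*} [TopologicalSpace X] [CompactSpace X] [T2Space X] [FirstCountableTopology X]
    [TopologicalSpace Y] [CompactSpace Y] [T2Space Y] [FirstCountableTopology Y]
    (h2X : ∃ a b : X, a ≠ b) (h2Y : ∃ a b : Y, a ≠ b)
    (Δ : C(X, ℂ) → C(Y, ℂ)) (hΔ : TwoLocalDiamPreserving Δ)
    (x₁ x₂ : X) (hx : x₁ ≠ x₂) (h : C(X, ℂ))
    (hval : ∀ x, ∃ t : ℝ, 0 ≤ t ∧ t ≤ 1 ∧ h x = t)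
    (h1 : ⇑h ⁻¹' {1} = {x₁}) (h0 : ⇑h ⁻¹' {0} = {x₂}) :
    ∀ f : C(X, ℂ),
      (Bset Δ x₁ x₂ f).Nonempty ∧
      IsClosed {p : {q : (Y × Y) × ℂ // q.1.1 ≠ q.1.2 ∧ ‖q.2‖ = 1} |
        (p : (Y × Y) × ℂ) ∈ Bset Δ x₁ x₂ f} ∧
      Bset Δ x₁ x₂ h ⊆ Bset Δ x₁ x₂ f := by
  have hY : Nonempty Y := ⟨h2Y.choose⟩
  have hx1 : h x₁ = 1 := by
    have : x₁ ∈ (⇑h ⁻¹' {1} : Set X) := by rw [h1]; exact rfl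
    exact this
  have hx2 : h x₂ = 0 := by
    have : x₂ ∈ (⇑h ⁻¹' {0} : Set X) := by rw [h0]; exact rfl
    exact this
  have hd : cdiam h = 1 := by
    refine le_antisymm (cdiam_le zero_le_one ?_) ?_
    · intro u v
      obtain ⟨a, ha0, ha1, hau⟩ := hval u
      obtain ⟨b, hb0, hb1, hbv⟩ := hval v
      rw [hau, hbv, ← Complex.ofReal_sub, Complex.norm_real, Real.norm_eq_abs, abs_le]
      constructor <;> linarith
    · have hle := pair_le_cdiam h x₁ x₂
      rw [hx1, hx2] at hle
      simpa using hle
  have hsub : ∀ f, Bset Δ x₁ x₂ h ⊆ Bset Δ x₁ x₂ f := by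
    intro f p hp
    obtain ⟨hne, habs, heq⟩ := hp
    obtain ⟨T, hTbij, hTd, hTf, hTh⟩ := hΔ f h
    have hTdiam : ∀ g, cdiam (T g) = cdiam g := by
      intro g
      have := hTd g 0
      simpa using this
    set ψ : C(X, ℂ) →ₗ[ℂ] ℂ :=
      { toFun := fun g => T g p.1.1 - T g p.1.2
        map_add' := fun a b => by simp; ring
        map_smul' := fun a b => by simp; ring } with hψdef
    have hψb : ∀ g, ‖ψ g‖ ≤ cdiam g := fun g =>
      (pair_le_cdiam (T g) _ _).trans_eq (hTdiam g)
    have hψh : ψ h = p.2 := by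
      have : ψ h = Δ h p.1.1 - Δ h p.1.2 := by simp [hψdef, hTh]
      rw [this, heq, hx1, hx2]
      ring
    have hk := key_full x₁ x₂ h hval h1 h0 ψ hψb (by rw [hψh]; exact habs) f
    refine ⟨hne, habs, ?_⟩
    rw [hψh] at hk
    have : ψ f = Δ f p.1.1 - Δ f p.1.2 := by simp [hψdef, hTf]
    rw [← this, hk]
  intro f
  refine ⟨?_, ?_, hsub f⟩
  · obtain ⟨T, -, hTd, hTh, -⟩ := hΔ h h
    have hΔh : cdiam (Δ h) = 1 := by
      rw [← hTh]
      have : cdiam (T h) = cdiam h := by simpa using hTd h 0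
      rw [this, hd]
    obtain ⟨y₁, y₂, hyy⟩ := cdiam_exists (Δ h)
    rw [hΔh] at hyy
    have hne : y₁ ≠ y₂ := by
      rintro rfl
      simp at hyy
    have hmem : ((y₁, y₂), Δ h y₁ - Δ h y₂) ∈ Bset Δ x₁ x₂ h := by
      refine ⟨hne, hyy.symm, ?_⟩
      rw [hx1, hx2]
      ring
    exact ⟨_, hsub f hmem⟩
  · have hset : {p : {q : (Y × Y) × ℂ // q.1.1 ≠ q.1.2 ∧ ‖q.2‖ = 1} |
        (p : (Y × Y) × ℂ) ∈ Bset Δ x₁ x₂ f} =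
        {p : {q : (Y × Y) × ℂ // q.1.1 ≠ q.1.2 ∧ ‖q.2‖ = 1} |
          Δ f (p : (Y × Y) × ℂ).1.1 - Δ f (p : (Y × Y) × ℂ).1.2 =
            (p : (Y × Y) × ℂ).2 * (f x₁ - f x₂)} := by
      ext p
      simp [Bset, p.2.1, p.2.2]
    rw [hset]
    apply isClosed_eq
    · exact ((Δ f).continuous.comp ((continuous_fst.comp continuous_fst).comp
        continuous_subtype_val)).sub ((Δ f).continuous.comp
        ((continuous_snd.comp continuous_fst).comp continuous_subtype_val))
    · exact (continuous_snd.comp continuous_subtype_val).mul continuous_const
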